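/- (Bellman function lemma for the embedding condition) There is an absolute constant C > 0 such that for every weight w (with w^{-1} locally integrable) and every dyadic interval J: (1/|J|) ∑_{I ∈ D(J)} |I| ⟨w⟩_I^{1/4} ⟨w^{-1}⟩_I^{1/4} ( (|Δ_{I₊}w| + |Δ_{I₋}w|)/⟨w⟩_I )² ≤ C ⟨w⟩_J^{1/4} ⟨w^{-1}⟩_J^{1/4}. Consequently, if w ∈ A₂^d, then (1/|J|) ∑_{I ∈ D(J)} |I| ⟨w⟩_I ⟨w^{-1}⟩_I ( (|Δ_{I₊}w| + |Δ_{I₋}w|)/⟨w⟩_I )² ≤ C [w]_{A₂^d}. -/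

import Mathlib

open MeasureTheory Set

/-- A dyadic interval `[k·2⁻ⁿ, (k+1)·2⁻ⁿ)`. -/
structure DyadicI where
  n : ℤ
  k : ℤ

namespace DyadicI

noncomputable def len (I : DyadicI) : ℝ := (2:ℝ) ^ (-I.n)

noncomputable def left (I : DyadicI) : ℝ := I.k * I.len

noncomputable def set (I : DyadicI) : Set ℝ := Set.Ico I.left (I.left + I.len)

/-- left half -/
def minus (I : DyadicI) : DyadicI := ⟨I.n + 1, 2 * I.k⟩

/-- right half -/
def plus (I : DyadicI) : DyadicI := ⟨I.n + 1, 2 * I.k + 1⟩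

/-- dyadic parent -/
def parent (I : DyadicI) : DyadicI := ⟨I.n - 1, Int.fdiv I.k 2⟩

/-- `w(I) = ∫_I w` -/
noncomputable def intg (w : ℝ → ℝ) (I : DyadicI) : ℝ := ∫ x in I.set, w x

/-- `⟨w⟩_I = |I|⁻¹ ∫_I w` -/
noncomputable def avg (w : ℝ → ℝ) (I : DyadicI) : ℝ := (∫ x in I.set, w x) / I.len

/-- Haar function `h_I = |I|^{-1/2}(χ_{I₊} - χ_{I₋})` -/
noncomputable def haar (I : DyadicI) : ℝ → ℝ := fun x =>
  (1 / Real.sqrt I.len) *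
    (I.plus.set.indicator (fun _ => (1:ℝ)) x - I.minus.set.indicator (fun _ => (1:ℝ)) x)

/-- weighted Haar function `h^w_I` -/
noncomputable def whaar (w : ℝ → ℝ) (I : DyadicI) : ℝ → ℝ := fun x =>
  (1 / Real.sqrt (intg w I)) *
    (Real.sqrt (intg w I.minus / intg w I.plus) * I.plus.set.indicator (fun _ => (1:ℝ)) x
      - Real.sqrt (intg w I.plus / intg w I.minus) * I.minus.set.indicator (fun _ => (1:ℝ)) x)

/-- `Δ_I w = (⟨w⟩_{I₊} − ⟨w⟩_{I₋})/2` -/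
noncomputable def del (w : ℝ → ℝ) (I : DyadicI) : ℝ := (avg w I.plus - avg w I.minus) / 2

end DyadicI

/-- weighted inner product `⟨f,g⟩_w = ∫ f g w` -/
noncomputable def wip (w f g : ℝ → ℝ) : ℝ := ∫ x, f x * g x * w x

/-- a weight: locally integrable and positive a.e. -/
def IsWeight (w : ℝ → ℝ) : Prop :=
  MeasureTheory.LocallyIntegrable w ∧ ∀ᵐ x ∂(volume : Measure ℝ), 0 < w x

noncomputable def winv (w : ℝ → ℝ) : ℝ → ℝ := fun x => (w x)⁻¹

/-- membership in dyadic A₂ -/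
def MemA2d (w : ℝ → ℝ) : Prop :=
  BddAbove (Set.range fun I : DyadicI => DyadicI.avg w I * DyadicI.avg (winv w) I)

/-- the dyadic A₂ characteristic `[w]_{A₂^d}` -/
noncomputable def A2d (w : ℝ → ℝ) : ℝ :=
  ⨆ I : DyadicI, DyadicI.avg w I * DyadicI.avg (winv w) I

/-- the dyadic BMO norm -/
noncomputable def bmoD (b : ℝ → ℝ) : ℝ :=
  ⨆ I : DyadicI, (∫ x in I.set, |b x - DyadicI.avg b I|) / I.len

/-- membership in dyadic BMO -/
def MemBMOd (b : ℝ → ℝ) : Prop :=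
  BddAbove (Set.range fun I : DyadicI => (∫ x in I.set, |b x - DyadicI.avg b I|) / I.len)


set_option maxHeartbeats 1000000
section NVsec
namespace NV19
open DyadicI

noncomputable def q (x : ℝ) : ℝ := Real.sqrt (Real.sqrt x)

lemma q_nonneg (x : ℝ) : 0 ≤ q x := Real.sqrt_nonneg _

lemma q_pos {x : ℝ} (hx : 0 < x) : 0 < q x := Real.sqrt_pos.2 (Real.sqrt_pos.2 hx)

lemma q_le_q {x y : ℝ} (h : x ≤ y) : q x ≤ q y :=
  Real.sqrt_le_sqrt (Real.sqrt_le_sqrt h)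

lemma q_mul {x y : ℝ} (hx : 0 ≤ x) : q (x*y) = q x * q y := by
  unfold q
  rw [Real.sqrt_mul hx, Real.sqrt_mul (Real.sqrt_nonneg _)]

lemma rpow_quarter {x : ℝ} (hx : 0 ≤ x) : x ^ ((1:ℝ)/4) = q x := by
  rw [show (1:ℝ)/4 = (1/2)*(1/2) by norm_num, Real.rpow_mul hx,
    ← Real.sqrt_eq_rpow, ← Real.sqrt_eq_rpow]
  rfl

lemma le_of_sq_le' {x y : ℝ} (hx : 0 ≤ x) (hy : 0 ≤ y) (h : x^2 ≤ y^2) : x ≤ y := by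
  nlinarith

lemma sqrt_mul_le' {a b : ℝ} (ha : 0 ≤ a) (hb : 0 ≤ b) :
    Real.sqrt a * Real.sqrt b ≤ (a+b)/2 := by
  nlinarith [sq_nonneg (Real.sqrt a - Real.sqrt b), Real.sq_sqrt ha, Real.sq_sqrt hb]

lemma cs2 {a b c d : ℝ} (ha : 0 ≤ a) (hb : 0 ≤ b) (hc : 0 ≤ c) (hd : 0 ≤ d) :
    Real.sqrt (a*c) + Real.sqrt (b*d) ≤ Real.sqrt (a+b) * Real.sqrt (c+d) := by
  apply le_of_sq_le' (by positivity) (by positivity)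
  have e1 : Real.sqrt (a*c) ^ 2 = a*c := Real.sq_sqrt (by positivity)
  have e2 : Real.sqrt (b*d) ^ 2 = b*d := Real.sq_sqrt (by positivity)
  have e3 : Real.sqrt (a*c) * Real.sqrt (b*d) = Real.sqrt (a*d) * Real.sqrt (b*c) := by
    rw [← Real.sqrt_mul (by positivity), ← Real.sqrt_mul (by positivity)]
    ring_nf
  have e4 : Real.sqrt (a*d) * Real.sqrt (b*c) ≤ (a*d + b*c)/2 :=
    sqrt_mul_le' (by positivity) (by positivity)
  have e5 : (Real.sqrt (a+b) * Real.sqrt (c+d))^2 = (a+b)*(c+d) := by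
    rw [mul_pow, Real.sq_sqrt (by positivity), Real.sq_sqrt (by positivity)]
  nlinarith [e3, e4]

lemma sqrt_add_le {v1 v2 : ℝ} (h1 : 0 ≤ v1) (h2 : 0 ≤ v2) :
    Real.sqrt v1 + Real.sqrt v2 ≤ 2 * Real.sqrt ((v1+v2)/2) := by
  apply le_of_sq_le' (by positivity) (by positivity)
  have e1 := Real.sq_sqrt h1
  have e2 := Real.sq_sqrt h2
  have e3 := Real.sq_sqrt (show (0:ℝ) ≤ (v1+v2)/2 by positivity)
  have e4 := sqrt_mul_le' h1 h2
  nlinarith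

lemma one_step' {t : ℝ} (ht : t^2 ≤ 1) {v1 v2 : ℝ} (hv1 : 0 ≤ v1) (hv2 : 0 ≤ v2)
    {U : ℝ} (hU : 0 ≤ U) :
    q (U*(1+t)) * q v1 + q (U*(1-t)) * q v2
      ≤ 2*(1 - t^2/16) * (q U * q ((v1+v2)/2)) := by
  have habs : -1 ≤ t ∧ t ≤ 1 := abs_le.1 (abs_le_one_iff_mul_self_le_one.2 (by nlinarith))
  have h1t : (0:ℝ) ≤ 1 + t := by linarith [habs.1]
  have h1t' : (0:ℝ) ≤ 1 - t := by linarith [habs.2]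
  -- step A: rewrite products as single sqrt
  have eA1 : q (U*(1+t)) * q v1 = Real.sqrt (Real.sqrt (U*(1+t)) * Real.sqrt v1) := by
    unfold q; rw [Real.sqrt_mul (Real.sqrt_nonneg _)]
  have eA2 : q (U*(1-t)) * q v2 = Real.sqrt (Real.sqrt (U*(1-t)) * Real.sqrt v2) := by
    unfold q; rw [Real.sqrt_mul (Real.sqrt_nonneg _)]
  -- Cauchy-Schwarz
  have hCS : Real.sqrt (Real.sqrt (U*(1+t)) * Real.sqrt v1)
        + Real.sqrt (Real.sqrt (U*(1-t)) * Real.sqrt v2)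
      ≤ Real.sqrt (Real.sqrt (U*(1+t)) + Real.sqrt (U*(1-t)))
        * Real.sqrt (Real.sqrt v1 + Real.sqrt v2) :=
    cs2 (Real.sqrt_nonneg _) (Real.sqrt_nonneg _) (Real.sqrt_nonneg _) (Real.sqrt_nonneg _)
  -- u part
  have hC : Real.sqrt (U*(1+t)) + Real.sqrt (U*(1-t)) ≤ 2*(1 - t^2/8) * Real.sqrt U := by
    apply le_of_sq_le' (by positivity) (by nlinarith [Real.sqrt_nonneg U])
    have e1 : Real.sqrt (U*(1+t)) ^ 2 = U*(1+t) := Real.sq_sqrt (by positivity)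
    have e2 : Real.sqrt (U*(1-t)) ^ 2 = U*(1-t) := Real.sq_sqrt (by positivity)
    have e3 : Real.sqrt (U*(1+t)) * Real.sqrt (U*(1-t))
        = Real.sqrt ((U*(1+t))*(U*(1-t))) := (Real.sqrt_mul (by positivity) _).symm
    have e4 : Real.sqrt ((U*(1+t))*(U*(1-t))) ≤ U*(1 - t^2/2) := by
      have h5 : (U*(1+t))*(U*(1-t)) ≤ (U*(1 - t^2/2))^2 := by nlinarith [sq_nonneg (U*t^2)]
      calc Real.sqrt ((U*(1+t))*(U*(1-t))) ≤ Real.sqrt ((U*(1 - t^2/2))^2) :=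
            Real.sqrt_le_sqrt h5
        _ = U*(1 - t^2/2) := Real.sqrt_sq (by nlinarith)
    have e5 := Real.sq_sqrt hU
    have hL : (Real.sqrt (U*(1+t)) + Real.sqrt (U*(1-t)))^2 ≤ U*(4 - t^2) := by
      nlinarith [e1, e2, e3, e4]
    have hR : U*(4 - t^2) ≤ (2*(1 - t^2/8) * Real.sqrt U)^2 := by
      have e6 : (2*(1 - t^2/8) * Real.sqrt U)^2 = (4 - t^2 + t^4/16) * U := by
        rw [mul_pow, Real.sq_sqrt hU]; ring
      rw [e6]
      nlinarith [mul_nonneg hU (sq_nonneg (t^2))]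
    exact le_trans hL hR
  -- v part
  have hB := sqrt_add_le hv1 hv2
  -- combine
  have hmono1 : Real.sqrt (Real.sqrt (U*(1+t)) + Real.sqrt (U*(1-t)))
      ≤ Real.sqrt (2*(1 - t^2/8) * Real.sqrt U) := Real.sqrt_le_sqrt hC
  have hmono2 : Real.sqrt (Real.sqrt v1 + Real.sqrt v2)
      ≤ Real.sqrt (2 * Real.sqrt ((v1+v2)/2)) := Real.sqrt_le_sqrt hB
  have hfin : Real.sqrt (2*(1 - t^2/8) * Real.sqrt U) * Real.sqrt (2 * Real.sqrt ((v1+v2)/2))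
      ≤ 2*(1 - t^2/16) * (q U * q ((v1+v2)/2)) := by
    have e1 : Real.sqrt (2*(1 - t^2/8) * Real.sqrt U)
        = Real.sqrt 2 * Real.sqrt (1 - t^2/8) * q U := by
      rw [Real.sqrt_mul (by nlinarith), Real.sqrt_mul (by norm_num : (0:ℝ) ≤ 2)]
      rfl
    have e2 : Real.sqrt (2 * Real.sqrt ((v1+v2)/2))
        = Real.sqrt 2 * q ((v1+v2)/2) := by
      rw [Real.sqrt_mul (by norm_num : (0:ℝ) ≤ 2)]
      rfl
    have e3 : Real.sqrt (1 - t^2/8) ≤ 1 - t^2/16 := by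
      apply le_of_sq_le' (Real.sqrt_nonneg _) (by nlinarith)
      rw [Real.sq_sqrt (by nlinarith)]
      nlinarith [sq_nonneg (t^2)]
    have e4 : Real.sqrt 2 * Real.sqrt 2 = 2 := Real.mul_self_sqrt (by norm_num)
    rw [e1, e2]
    have hq1 : 0 ≤ q U := q_nonneg _
    have hq2 : 0 ≤ q ((v1+v2)/2) := q_nonneg _
    have hs2 : 0 ≤ Real.sqrt 2 := Real.sqrt_nonneg _
    calc Real.sqrt 2 * Real.sqrt (1 - t^2/8) * q U * (Real.sqrt 2 * q ((v1+v2)/2))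
        = (Real.sqrt 2 * Real.sqrt 2) * Real.sqrt (1 - t^2/8) * (q U * q ((v1+v2)/2)) := by ring
      _ = 2 * Real.sqrt (1 - t^2/8) * (q U * q ((v1+v2)/2)) := by rw [e4]
      _ ≤ 2*(1 - t^2/16) * (q U * q ((v1+v2)/2)) := by
          apply mul_le_mul_of_nonneg_right _ (by positivity)
          nlinarith [e3]
  calc q (U*(1+t)) * q v1 + q (U*(1-t)) * q v2
      = Real.sqrt (Real.sqrt (U*(1+t)) * Real.sqrt v1)
        + Real.sqrt (Real.sqrt (U*(1-t)) * Real.sqrt v2) := by rw [eA1, eA2]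
    _ ≤ Real.sqrt (Real.sqrt (U*(1+t)) + Real.sqrt (U*(1-t)))
        * Real.sqrt (Real.sqrt v1 + Real.sqrt v2) := hCS
    _ ≤ Real.sqrt (2*(1 - t^2/8) * Real.sqrt U) * Real.sqrt (2 * Real.sqrt ((v1+v2)/2)) := by
        apply mul_le_mul hmono1 hmono2 (Real.sqrt_nonneg _) (Real.sqrt_nonneg _)
    _ ≤ 2*(1 - t^2/16) * (q U * q ((v1+v2)/2)) := hfin

lemma one_step {u1 u2 v1 v2 : ℝ} (hu1 : 0 < u1) (hu2 : 0 < u2) (hv1 : 0 ≤ v1) (hv2 : 0 ≤ v2) :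
    q u1 * q v1 + q u2 * q v2
      ≤ 2*(1 - ((u1-u2)/(u1+u2))^2/16) * (q ((u1+u2)/2) * q ((v1+v2)/2)) := by
  have hs : (0:ℝ) < u1 + u2 := by linarith
  have ht : ((u1-u2)/(u1+u2))^2 ≤ 1 := by
    rw [div_pow, div_le_one (by positivity)]
    nlinarith
  have e1 : (u1+u2)/2 * (1 + (u1-u2)/(u1+u2)) = u1 := by field_simp; ring
  have e2 : (u1+u2)/2 * (1 - (u1-u2)/(u1+u2)) = u2 := by field_simp; ring
  have := one_step' ht hv1 hv2 (show (0:ℝ) ≤ (u1+u2)/2 by positivity)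
  rw [e1, e2] at this
  exact this

lemma q_two {x : ℝ} (hx : 0 ≤ x) : q (2*x) = Real.sqrt (Real.sqrt 2) * q x := by
  unfold q
  rw [Real.sqrt_mul (by norm_num : (0:ℝ) ≤ 2), Real.sqrt_mul (Real.sqrt_nonneg 2)]


lemma bellman_alg {B x y a b p r : ℝ} (hB : 0 < B) (hx : 0 ≤ x) (hy : 0 ≤ y)
    (ha0 : 0 ≤ a) (ha1 : a ≤ 1) (hb0 : 0 ≤ b) (hb1 : b ≤ 1)
    (hp0 : 0 ≤ p) (hr0 : 0 ≤ r) (hpr : p + r = 2)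
    (f3 : x + y ≤ 2*B) (f4 : x ≤ 1.42*B) (f5 : y ≤ 1.42*B) :
    B * (a*p + b*r)^2 ≤ 512 * (B - (x+y)/2 + (a^2*x + b^2*y)/32) := by
  have hxyB : 0 ≤ B - (x+y)/2 := by linarith
  have habxy : 0 ≤ a^2*x + b^2*y :=
    add_nonneg (mul_nonneg (sq_nonneg a) hx) (mul_nonneg (sq_nonneg b) hy)
  rcases le_or_gt (B/2) x with hxB | hxB
  · rcases le_or_gt (B/2) y with hyB | hyB
    · have s1 : (a*p + b*r)^2 ≤ 2*(a^2*p^2 + b^2*r^2) := by nlinarith [sq_nonneg (a*p - b*r)]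
      have hp2 : p ≤ 2 := by linarith
      have hr2 : r ≤ 2 := by linarith
      have sp : p^2 ≤ 4 := by nlinarith
      have sr : r^2 ≤ 4 := by nlinarith
      have s2 : a^2*p^2 ≤ a^2*4 := mul_le_mul_of_nonneg_left sp (sq_nonneg a)
      have s3 : b^2*r^2 ≤ b^2*4 := mul_le_mul_of_nonneg_left sr (sq_nonneg b)
      have s4 : (a*p + b*r)^2 ≤ 8*(a^2+b^2) := by linarith
      have h4 : B * (a*p+b*r)^2 ≤ B * (8*(a^2+b^2)) := mul_le_mul_of_nonneg_left s4 hB.le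
      have s5 : a^2*B ≤ a^2*(2*x) := mul_le_mul_of_nonneg_left (by linarith) (sq_nonneg a)
      have s6 : b^2*B ≤ b^2*(2*y) := mul_le_mul_of_nonneg_left (by linarith) (sq_nonneg b)
      nlinarith [h4, s5, s6]
    · have e1 : a*p ≤ p := mul_le_of_le_one_left hp0 ha1
      have e2 : b*r ≤ r := mul_le_of_le_one_left hr0 hb1
      have h1 : a*p + b*r ≤ 2 := by linarith
      have h0 : 0 ≤ a*p + b*r := add_nonneg (mul_nonneg ha0 hp0) (mul_nonneg hb0 hr0)
      have h2 : (a*p+b*r)^2 ≤ 4 := by nlinarith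
      have h2' : B*(a*p+b*r)^2 ≤ B*4 := mul_le_mul_of_nonneg_left h2 hB.le
      have h3 : B - (x+y)/2 ≥ (0.04:ℝ)*B := by linarith
      linarith
  · have e1 : a*p ≤ p := mul_le_of_le_one_left hp0 ha1
    have e2 : b*r ≤ r := mul_le_of_le_one_left hr0 hb1
    have h1 : a*p + b*r ≤ 2 := by linarith
    have h0 : 0 ≤ a*p + b*r := add_nonneg (mul_nonneg ha0 hp0) (mul_nonneg hb0 hr0)
    have h2 : (a*p+b*r)^2 ≤ 4 := by nlinarith
    have h2' : B*(a*p+b*r)^2 ≤ B*4 := mul_le_mul_of_nonneg_left h2 hB.le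
    have h3 : B - (x+y)/2 ≥ (0.04:ℝ)*B := by linarith
    linarith

-- concavity corollary
lemma one_step_le {u1 u2 v1 v2 : ℝ} (hu1 : 0 < u1) (hu2 : 0 < u2) (hv1 : 0 ≤ v1) (hv2 : 0 ≤ v2) :
    q u1 * q v1 + q u2 * q v2 ≤ 2 * (q ((u1+u2)/2) * q ((v1+v2)/2)) := by
  refine le_trans (one_step hu1 hu2 hv1 hv2) ?_
  have h1 : 0 ≤ q ((u1+u2)/2) * q ((v1+v2)/2) := mul_nonneg (q_nonneg _) (q_nonneg _)
  nlinarith [sq_nonneg ((u1-u2)/(u1+u2))]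

lemma child_le {a b u v : ℝ} (ha : 0 ≤ a) (hb : 0 ≤ b) (hu : 0 ≤ u) (hv : 0 ≤ v)
    (h1 : a ≤ 2*u) (h2 : b ≤ 2*v) :
    q a * q b ≤ Real.sqrt 2 * (q u * q v) := by
  have e1 : q a ≤ Real.sqrt (Real.sqrt 2) * q u := by
    rw [← q_two hu]; exact q_le_q h1
  have e2 : q b ≤ Real.sqrt (Real.sqrt 2) * q v := by
    rw [← q_two hv]; exact q_le_q h2
  have e3 : Real.sqrt (Real.sqrt 2) * Real.sqrt (Real.sqrt 2) = Real.sqrt 2 :=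
    Real.mul_self_sqrt (Real.sqrt_nonneg _)
  calc q a * q b ≤ (Real.sqrt (Real.sqrt 2) * q u) * (Real.sqrt (Real.sqrt 2) * q v) :=
        mul_le_mul e1 e2 (q_nonneg _) (mul_nonneg (Real.sqrt_nonneg _) (q_nonneg _))
    _ = (Real.sqrt (Real.sqrt 2) * Real.sqrt (Real.sqrt 2)) * (q u * q v) := by ring
    _ = Real.sqrt 2 * (q u * q v) := by rw [e3]

/-- the two-step Bellman key inequality -/
lemma key {u1 u2 u3 u4 v1 v2 v3 v4 u v : ℝ}
    (hu1 : 0 < u1) (hu2 : 0 < u2) (hu3 : 0 < u3) (hu4 : 0 < u4)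
    (hv1 : 0 < v1) (hv2 : 0 < v2) (hv3 : 0 < v3) (hv4 : 0 < v4)
    (hu : u = ((u1+u2)/2 + (u3+u4)/2)/2) (hv : v = ((v1+v2)/2 + (v3+v4)/2)/2) :
    q u * q v * ((|u1-u2|/2 + |u3-u4|/2) / u)^2
      ≤ 512 * (q u * q v - (q u1*q v1 + q u2*q v2 + q u3*q v3 + q u4*q v4)/4) := by
  have hupos : 0 < u := by rw [hu]; positivity
  have hvpos : 0 < v := by rw [hv]; positivity
  set up := (u1+u2)/2 with hup
  set um := (u3+u4)/2 with hum
  set vp := (v1+v2)/2 with hvp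
  set vm := (v3+v4)/2 with hvm
  have huppos : 0 < up := by positivity
  have humpos : 0 < um := by positivity
  set B := q u * q v with hB
  set x := q up * q vp with hx
  set y := q um * q vm with hy
  have hBpos : 0 < B := mul_pos (q_pos hupos) (q_pos hvpos)
  have hxnn : 0 ≤ x := mul_nonneg (q_nonneg _) (q_nonneg _)
  have hynn : 0 ≤ y := mul_nonneg (q_nonneg _) (q_nonneg _)
  set tP := (u1-u2)/(u1+u2) with htP
  set tM := (u3-u4)/(u3+u4) with htM
  have f1 : q u1 * q v1 + q u2 * q v2 ≤ 2*(1 - tP^2/16) * x :=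
    one_step hu1 hu2 hv1.le hv2.le
  have f2 : q u3 * q v3 + q u4 * q v4 ≤ 2*(1 - tM^2/16) * y :=
    one_step hu3 hu4 hv3.le hv4.le
  have f3 : x + y ≤ 2 * B := by
    have := one_step_le huppos humpos (le_of_lt (by positivity : (0:ℝ) < vp))
      (le_of_lt (by positivity : (0:ℝ) < vm))
    rw [← hu, ← hv] at this
    exact this
  have f4 : x ≤ Real.sqrt 2 * B := by
    apply child_le huppos.le (by positivity) hupos.le hvpos.le
    · rw [hu]; linarith
    · rw [hv]; linarith [ (by positivity : (0:ℝ) < vm) ]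
  have f5 : y ≤ Real.sqrt 2 * B := by
    apply child_le humpos.le (by positivity) hupos.le hvpos.le
    · rw [hu]; linarith
    · rw [hv]; linarith [ (by positivity : (0:ℝ) < vp) ]
  have hs2 : Real.sqrt 2 ≤ 1.42 := by
    rw [show (1.42:ℝ) = Real.sqrt (1.42^2) from (Real.sqrt_sq (by norm_num)).symm]
    exact Real.sqrt_le_sqrt (by norm_num)
  have htP1 : tP^2 ≤ 1 := by
    rw [htP, div_pow, div_le_one (by positivity)]; nlinarith
  have htM1 : tM^2 ≤ 1 := by
    rw [htM, div_pow, div_le_one (by positivity)]; nlinarith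
  -- rewrite the delta quotient
  set a := |tP| with ha
  set b := |tM| with hb
  have ha1 : a ≤ 1 := by
    have : a^2 ≤ 1 := by rw [ha, sq_abs]; exact htP1
    nlinarith [abs_nonneg tP]
  have hb1 : b ≤ 1 := by
    have : b^2 ≤ 1 := by rw [hb, sq_abs]; exact htM1
    nlinarith [abs_nonneg tM]
  have ha0 : 0 ≤ a := abs_nonneg _
  have hb0 : 0 ≤ b := abs_nonneg _
  have ha2 : a^2 = tP^2 := by rw [ha, sq_abs]
  have hb2 : b^2 = tM^2 := by rw [hb, sq_abs]
  set p := up/u with hp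
  set r := um/u with hr
  have hp0 : 0 < p := div_pos huppos hupos
  have hr0 : 0 < r := div_pos humpos hupos
  have hpr : p + r = 2 := by
    rw [hp, hr, ← add_div, hu]; field_simp
  have edel : (|u1-u2|/2 + |u3-u4|/2)/u = a*p + b*r := by
    rw [ha, hb, htP, htM, abs_div, abs_div, abs_of_pos (by positivity : (0:ℝ) < u1+u2),
      abs_of_pos (by positivity : (0:ℝ) < u3+u4), hp, hr, hup, hum]
    field_simp
  rw [edel]
  -- reduce to the central algebraic inequality
  have hmain : B * (a*p + b*r)^2 ≤ 512 * (B - (x+y)/2 + (a^2*x + b^2*y)/32) := by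
    have hx142 : x ≤ 1.42*B := le_trans f4 (mul_le_mul_of_nonneg_right hs2 hBpos.le)
    have hy142 : y ≤ 1.42*B := le_trans f5 (mul_le_mul_of_nonneg_right hs2 hBpos.le)
    exact bellman_alg hBpos hxnn hynn ha0 ha1 hb0 hb1 hp0.le hr0.le hpr f3 hx142 hy142
  refine le_trans hmain ?_
  have : (q u1*q v1 + q u2*q v2 + q u3*q v3 + q u4*q v4)/4
      ≤ ((1 - a^2/16)*x + (1 - b^2/16)*y)/2 := by
    rw [ha2, hb2]; linarith
  linarith

lemma len_pos (I : DyadicI) : 0 < I.len := zpow_pos (by norm_num) _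

lemma two_ne : ((2:ℝ)) ≠ 0 := by norm_num

lemma minus_len (I : DyadicI) : I.minus.len = I.len / 2 := by
  show (2:ℝ) ^ (-(I.n+1)) = (2:ℝ) ^ (-I.n) / 2
  rw [show -(I.n+1) = -I.n + (-1) by ring, zpow_add₀ two_ne, zpow_neg_one]
  ring

lemma plus_len (I : DyadicI) : I.plus.len = I.len / 2 := by
  show (2:ℝ) ^ (-(I.n+1)) = (2:ℝ) ^ (-I.n) / 2
  rw [show -(I.n+1) = -I.n + (-1) by ring, zpow_add₀ two_ne, zpow_neg_one]
  ring

lemma minus_left (I : DyadicI) : I.minus.left = I.left := by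
  show ((2 * I.k : ℤ) : ℝ) * I.minus.len = (I.k : ℝ) * I.len
  rw [minus_len]
  push_cast
  ring

lemma plus_left (I : DyadicI) : I.plus.left = I.left + I.len / 2 := by
  show ((2 * I.k + 1 : ℤ) : ℝ) * I.plus.len = (I.k : ℝ) * I.len + I.len / 2
  rw [plus_len]
  push_cast
  ring

lemma minus_set (I : DyadicI) : I.minus.set = Set.Ico I.left (I.left + I.len/2) := by
  unfold DyadicI.set
  rw [minus_left, minus_len]

lemma plus_set (I : DyadicI) : I.plus.set = Set.Ico (I.left + I.len/2) (I.left + I.len) := by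
  unfold DyadicI.set
  rw [plus_left, plus_len]
  ring_nf

lemma union_set (I : DyadicI) : I.minus.set ∪ I.plus.set = I.set := by
  rw [minus_set, plus_set]
  apply Set.Ico_union_Ico_eq_Ico <;> nlinarith [len_pos I]

lemma minus_subset (I : DyadicI) : I.minus.set ⊆ I.set := by
  rw [minus_set]
  unfold DyadicI.set
  exact Set.Ico_subset_Ico_right (by linarith [len_pos I])

lemma plus_subset (I : DyadicI) : I.plus.set ⊆ I.set := by
  rw [plus_set]
  unfold DyadicI.set
  exact Set.Ico_subset_Ico_left (by linarith [len_pos I])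

lemma disj (I : DyadicI) : Disjoint I.minus.set I.plus.set := by
  rw [minus_set, plus_set]
  exact Set.Ico_disjoint_Ico_same

lemma subset_iff {I P : DyadicI} :
    I.set ⊆ P.set ↔ P.left ≤ I.left ∧ I.left + I.len ≤ P.left + P.len :=
  Set.Ico_subset_Ico_iff (by linarith [len_pos I])

lemma len_le_of_subset {I P : DyadicI} (h : I.set ⊆ P.set) : I.len ≤ P.len := by
  obtain ⟨h1, h2⟩ := subset_iff.1 h; linarith

lemma n_ge_of_subset {I P : DyadicI} (h : I.set ⊆ P.set) : P.n ≤ I.n := by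
  have := len_le_of_subset h
  have h2 : (2:ℝ) ^ (-I.n) ≤ (2:ℝ) ^ (-P.n) := this
  rw [zpow_le_zpow_iff_right₀ (by norm_num : (1:ℝ) < 2)] at h2
  omega

lemma eq_of_subset_of_n_le {I P : DyadicI} (h : I.set ⊆ P.set) (hn : I.n ≤ P.n) : I = P := by
  have hn' : I.n = P.n := le_antisymm hn (n_ge_of_subset h)
  have hlen : I.len = P.len := by unfold DyadicI.len; rw [hn']
  obtain ⟨h1, h2⟩ := subset_iff.1 h
  have hleft : I.left = P.left := by linarith
  have hk : I.k = P.k := by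
    have : (I.k : ℝ) * I.len = (P.k : ℝ) * P.len := hleft
    rw [hlen] at this
    have := mul_right_cancel₀ (ne_of_gt (len_pos P)) this
    exact_mod_cast this
  cases I; cases P
  simp_all

lemma child_cases {I P : DyadicI} (h : I.set ⊆ P.set) (hn : P.n < I.n) :
    I.set ⊆ P.minus.set ∨ I.set ⊆ P.plus.set := by
  obtain ⟨h1, h2⟩ := subset_iff.1 h
  set d : ℕ := (I.n - P.n - 1).toNat with hd
  have hdz : (d : ℤ) = I.n - P.n - 1 := Int.toNat_of_nonneg (by omega)
  set M : ℤ := (2*P.k+1) * 2^d with hM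
  have hmid : P.left + P.len/2 = (M : ℝ) * (2:ℝ)^(-I.n) := by
    have e1 : ((M:ℤ):ℝ) = ((2*P.k+1 : ℤ):ℝ) * (2:ℝ)^(d:ℕ) := by
      rw [hM]; push_cast; ring
    have e2 : ((2:ℝ)^(d:ℕ) : ℝ) = (2:ℝ)^((d:ℤ)) := (zpow_natCast 2 d).symm
    rw [e1, e2, hdz]
    have e3 : (2:ℝ)^(I.n - P.n - 1) * (2:ℝ)^(-I.n) = (2:ℝ)^(-P.n-1) := by
      rw [← zpow_add₀ two_ne]; ring_nf
    have e4 : (2:ℝ)^(-P.n-1) = P.len / 2 := by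
      show (2:ℝ)^(-P.n-1) = (2:ℝ)^(-P.n) / 2
      rw [show -P.n-1 = -P.n + (-1) by ring, zpow_add₀ two_ne, zpow_neg_one]; ring
    push_cast
    rw [mul_assoc, e3, e4]
    show (P.k:ℝ) * P.len + P.len/2 = _
    ring
  have hIlen : I.len = (2:ℝ)^(-I.n) := rfl
  have hIleft : I.left = (I.k : ℝ) * (2:ℝ)^(-I.n) := rfl
  have hpow : (0:ℝ) < (2:ℝ)^(-I.n) := zpow_pos (by norm_num) _
  rcases lt_or_ge I.k M with hk | hk
  · left
    rw [minus_set]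
    unfold DyadicI.set at h ⊢
    apply Set.Ico_subset_Ico_iff (by linarith [len_pos I]) |>.2
    constructor
    · exact h1
    · rw [hmid, hIleft, hIlen]
      have : ((I.k:ℝ) + 1) ≤ (M:ℝ) := by exact_mod_cast hk
      nlinarith
  · right
    rw [plus_set]
    apply Set.Ico_subset_Ico_iff (by linarith [len_pos I]) |>.2
    constructor
    · rw [hmid, hIleft]
      have : (M:ℝ) ≤ (I.k:ℝ) := by exact_mod_cast hk
      nlinarith
    · exact h2

lemma volume_set (I : DyadicI) : volume I.set = ENNReal.ofReal I.len := by
  unfold DyadicI.set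
  rw [Real.volume_Ico]
  congr 1
  ring

lemma integrableOn_of_locally {w : ℝ → ℝ} (hw : MeasureTheory.LocallyIntegrable w volume)
    (I : DyadicI) : MeasureTheory.IntegrableOn w I.set volume :=
  (hw.integrableOn_isCompact isCompact_Icc).mono_set Set.Ico_subset_Icc_self

lemma avg_split {f : ℝ → ℝ} {I : DyadicI} (hf : MeasureTheory.IntegrableOn f I.set volume) :
    avg f I = (avg f I.plus + avg f I.minus)/2 := by
  have h1 : MeasureTheory.IntegrableOn f I.minus.set volume := hf.mono_set (minus_subset I)
  have h2 : MeasureTheory.IntegrableOn f I.plus.set volume := hf.mono_set (plus_subset I)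
  have e : ∫ x in I.set, f x = (∫ x in I.minus.set, f x) + ∫ x in I.plus.set, f x := by
    rw [← union_set I]
    exact MeasureTheory.setIntegral_union (disj I) measurableSet_Ico h1 h2
  unfold DyadicI.avg
  rw [e, plus_len, minus_len]
  have hl := len_pos I
  field_simp
  ring

lemma avg_nonneg {f : ℝ → ℝ} {I : DyadicI} (hpos : ∀ᵐ x ∂(volume : Measure ℝ), 0 ≤ f x) :
    0 ≤ avg f I :=
  div_nonneg (MeasureTheory.integral_nonneg_of_ae (MeasureTheory.ae_restrict_of_ae hpos))
    (len_pos I).le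

lemma avg_pos {f : ℝ → ℝ} {I : DyadicI} (hf : MeasureTheory.IntegrableOn f I.set volume)
    (hpos : ∀ᵐ x ∂(volume : Measure ℝ), 0 < f x) : 0 < avg f I := by
  apply div_pos _ (len_pos I)
  rw [MeasureTheory.setIntegral_pos_iff_support_of_nonneg_ae
    (MeasureTheory.ae_restrict_of_ae (hpos.mono fun x h => h.le)) hf]
  have hnull : volume {x : ℝ | ¬ 0 < f x} = 0 := hpos
  have hsub : I.set \ Function.support f ⊆ {x : ℝ | ¬ 0 < f x} := by
    intro x hx
    simp only [Function.mem_support, Set.mem_diff, not_not] at hx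
    simp [hx.2]
  have hdiff : volume (I.set \ Function.support f) = 0 := measure_mono_null hsub hnull
  have hle : volume I.set ≤ volume (Function.support f ∩ I.set) := by
    calc volume I.set = volume ((Function.support f ∩ I.set) ∪ (I.set \ Function.support f)) := by
          congr 1
          ext x
          by_cases hx : x ∈ Function.support f <;> simp [hx]
      _ ≤ volume (Function.support f ∩ I.set) + volume (I.set \ Function.support f) :=
          measure_union_le _ _
      _ = volume (Function.support f ∩ I.set) := by rw [hdiff, add_zero]
  calc (0:ENNReal) < volume I.set := by
        rw [volume_set]; exact ENNReal.ofReal_pos.2 (len_pos I)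
    _ ≤ _ := hle

variable {w : ℝ → ℝ}

noncomputable def bb (w : ℝ → ℝ) (I : DyadicI) : ℝ := q (avg w I) * q (avg (winv w) I)

noncomputable def tt (w : ℝ → ℝ) (I : DyadicI) : ℝ :=
  ((|del w I.plus| + |del w I.minus|) / avg w I)^2

noncomputable def termB (w : ℝ → ℝ) (I : DyadicI) : ℝ := I.len * bb w I * tt w I

noncomputable def gg (w : ℝ → ℝ) (I : DyadicI) : ℝ := (bb w I.plus + bb w I.minus)/2

noncomputable def term2 (w : ℝ → ℝ) (I : DyadicI) : ℝ :=
  I.len * avg w I * avg (winv w) I * tt w I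

lemma bb_nonneg (w : ℝ → ℝ) (I : DyadicI) : 0 ≤ bb w I :=
  mul_nonneg (q_nonneg _) (q_nonneg _)

lemma gg_nonneg (w : ℝ → ℝ) (I : DyadicI) : 0 ≤ gg w I := by
  have := bb_nonneg w I.plus; have := bb_nonneg w I.minus
  unfold gg; linarith

lemma tt_nonneg (w : ℝ → ℝ) (I : DyadicI) : 0 ≤ tt w I := sq_nonneg _

lemma termB_nonneg (w : ℝ → ℝ) (I : DyadicI) : 0 ≤ termB w I :=
  mul_nonneg (mul_nonneg (len_pos I).le (bb_nonneg w I)) (tt_nonneg w I)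

lemma term2_nonneg (hwpos : ∀ᵐ x ∂(volume : Measure ℝ), 0 < w x) (I : DyadicI) :
    0 ≤ term2 w I := by
  have h1 : 0 ≤ avg w I := avg_nonneg (hwpos.mono fun x h => h.le)
  have h2 : 0 ≤ avg (winv w) I := avg_nonneg (hwpos.mono fun x h => (inv_pos.2 h).le)
  exact mul_nonneg (mul_nonneg (mul_nonneg (len_pos I).le h1) h2) (tt_nonneg w I)

lemma winv_pos (hwpos : ∀ᵐ x ∂(volume : Measure ℝ), 0 < w x) :
    ∀ᵐ x ∂(volume : Measure ℝ), 0 < winv w x :=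
  hwpos.mono fun x h => inv_pos.2 h

/-- the per-interval Bellman estimate -/
lemma key_interval (hw : MeasureTheory.LocallyIntegrable w volume)
    (hwpos : ∀ᵐ x ∂(volume : Measure ℝ), 0 < w x) {P I : DyadicI}
    (hv : MeasureTheory.IntegrableOn (winv w) P.set volume) (hIP : I.set ⊆ P.set) :
    termB w I ≤ 512 * (I.len * bb w I - (I.len/2) * (gg w I.plus + gg w I.minus)) := by
  have hvpos := winv_pos hwpos
  have hvI : MeasureTheory.IntegrableOn (winv w) I.set volume := hv.mono_set hIP
  have hvIp : MeasureTheory.IntegrableOn (winv w) I.plus.set volume :=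
    hvI.mono_set (plus_subset I)
  have hvIm : MeasureTheory.IntegrableOn (winv w) I.minus.set volume :=
    hvI.mono_set (minus_subset I)
  set u1 := avg w I.plus.plus
  set u2 := avg w I.plus.minus
  set u3 := avg w I.minus.plus
  set u4 := avg w I.minus.minus
  set v1 := avg (winv w) I.plus.plus
  set v2 := avg (winv w) I.plus.minus
  set v3 := avg (winv w) I.minus.plus
  set v4 := avg (winv w) I.minus.minus
  have hu1 : 0 < u1 := avg_pos (integrableOn_of_locally hw _) hwpos
  have hu2 : 0 < u2 := avg_pos (integrableOn_of_locally hw _) hwpos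
  have hu3 : 0 < u3 := avg_pos (integrableOn_of_locally hw _) hwpos
  have hu4 : 0 < u4 := avg_pos (integrableOn_of_locally hw _) hwpos
  have hv1 : 0 < v1 := avg_pos (hvIp.mono_set (plus_subset _)) hvpos
  have hv2 : 0 < v2 := avg_pos (hvIp.mono_set (minus_subset _)) hvpos
  have hv3 : 0 < v3 := avg_pos (hvIm.mono_set (plus_subset _)) hvpos
  have hv4 : 0 < v4 := avg_pos (hvIm.mono_set (minus_subset _)) hvpos
  have hU : avg w I = ((u1+u2)/2 + (u3+u4)/2)/2 := by
    rw [avg_split (integrableOn_of_locally hw I),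
      avg_split (integrableOn_of_locally hw I.plus),
      avg_split (integrableOn_of_locally hw I.minus)]
  have hV : avg (winv w) I = ((v1+v2)/2 + (v3+v4)/2)/2 := by
    rw [avg_split hvI, avg_split hvIp, avg_split hvIm]
  have hdelp : |del w I.plus| = |u1 - u2|/2 := by
    show |(u1 - u2)/2| = |u1 - u2|/2
    rw [abs_div, abs_two]
  have hdelm : |del w I.minus| = |u3 - u4|/2 := by
    show |(u3 - u4)/2| = |u3 - u4|/2
    rw [abs_div, abs_two]
  have hkey := key hu1 hu2 hu3 hu4 hv1 hv2 hv3 hv4 hU hV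
  have hbt : bb w I * tt w I
      ≤ 512 * (bb w I - (q u1*q v1 + q u2*q v2 + q u3*q v3 + q u4*q v4)/4) := by
    unfold bb tt
    rw [hdelp, hdelm]
    exact hkey
  have hgg : (q u1*q v1 + q u2*q v2 + q u3*q v3 + q u4*q v4)/4
      = (gg w I.plus + gg w I.minus)/2 := by
    unfold gg bb
    ring
  rw [hgg] at hbt
  have hfin := mul_le_mul_of_nonneg_left hbt (len_pos I).le
  calc termB w I = I.len * (bb w I * tt w I) := by unfold termB; ring
    _ ≤ I.len * (512 * (bb w I - (gg w I.plus + gg w I.minus)/2)) := hfin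
    _ = 512 * (I.len * bb w I - (I.len/2) * (gg w I.plus + gg w I.minus)) := by ring

lemma gg_le_bb (hw : MeasureTheory.LocallyIntegrable w volume)
    (hwpos : ∀ᵐ x ∂(volume : Measure ℝ), 0 < w x) {I : DyadicI}
    (hv : MeasureTheory.IntegrableOn (winv w) I.set volume) : gg w I ≤ bb w I := by
  have hvpos := winv_pos hwpos
  have hu1 : 0 < avg w I.plus := avg_pos (integrableOn_of_locally hw _) hwpos
  have hu2 : 0 < avg w I.minus := avg_pos (integrableOn_of_locally hw _) hwpos
  have hv1 : 0 ≤ avg (winv w) I.plus := avg_nonneg (hvpos.mono fun x h => h.le)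
  have hv2 : 0 ≤ avg (winv w) I.minus := avg_nonneg (hvpos.mono fun x h => h.le)
  have h := one_step_le hu1 hu2 hv1 hv2
  have hU : (avg w I.plus + avg w I.minus)/2 = avg w I :=
    (avg_split (integrableOn_of_locally hw I)).symm
  have hV : (avg (winv w) I.plus + avg (winv w) I.minus)/2 = avg (winv w) I :=
    (avg_split hv).symm
  rw [hU, hV] at h
  unfold gg bb at *
  linarith

/-- splitting a finite sum over subintervals of `P` -/
lemma sum_split {f : DyadicI → ℝ} (hf : ∀ I, 0 ≤ f I) {P : DyadicI} (S : Finset DyadicI)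
    (hS : ∀ I ∈ S, I.set ⊆ P.set) :
    ∃ Sm Sp : Finset DyadicI, (∀ I ∈ Sm, I.set ⊆ P.minus.set) ∧
      (∀ I ∈ Sp, I.set ⊆ P.plus.set) ∧ Sm ⊆ S ∧ Sp ⊆ S ∧
      ∑ I ∈ S, f I ≤ f P + ((∑ I ∈ Sm, f I) + ∑ I ∈ Sp, f I) := by
  classical
  refine ⟨S.filter (fun I => I.set ⊆ P.minus.set),
    S.filter (fun I => ¬ I.set ⊆ P.minus.set ∧ I.set ⊆ P.plus.set),
    fun I hI => (Finset.mem_filter.1 hI).2,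
    fun I hI => (Finset.mem_filter.1 hI).2.2,
    Finset.filter_subset _ _, Finset.filter_subset _ _, ?_⟩
  rw [← Finset.sum_filter_add_sum_filter_not S (fun I => I.set ⊆ P.minus.set) f]
  rw [← Finset.sum_filter_add_sum_filter_not
    (S.filter (fun I => ¬ I.set ⊆ P.minus.set)) (fun I => I.set ⊆ P.plus.set) f]
  rw [Finset.filter_filter, Finset.filter_filter]
  have hrest : (S.filter (fun I => ¬ I.set ⊆ P.minus.set ∧ ¬ I.set ⊆ P.plus.set)) ⊆ {P} := by
    intro I hI
    obtain ⟨hIS, hnm, hnp⟩ := Finset.mem_filter.1 hI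
    rw [Finset.mem_singleton]
    rcases lt_or_ge P.n I.n with hn | hn
    · rcases child_cases (hS I hIS) hn with h | h
      · exact absurd h hnm
      · exact absurd h hnp
    · exact eq_of_subset_of_n_le (hS I hIS) hn
  have hrest2 : ∑ I ∈ S.filter (fun I => ¬ I.set ⊆ P.minus.set ∧ ¬ I.set ⊆ P.plus.set), f I
      ≤ f P := by
    calc ∑ I ∈ S.filter (fun I => ¬ I.set ⊆ P.minus.set ∧ ¬ I.set ⊆ P.plus.set), f I
        ≤ ∑ I ∈ ({P} : Finset DyadicI), f I :=
          Finset.sum_le_sum_of_subset_of_nonneg hrest (fun i _ _ => hf i)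
      _ = f P := Finset.sum_singleton _ _
  linarith

lemma core (hw : MeasureTheory.LocallyIntegrable w volume)
    (hwpos : ∀ᵐ x ∂(volume : Measure ℝ), 0 < w x) :
    ∀ (N : ℕ) (P : DyadicI), MeasureTheory.IntegrableOn (winv w) P.set volume →
    ∀ S : Finset DyadicI, (∀ I ∈ S, I.set ⊆ P.set ∧ I.n ≤ P.n + N) →
    ∑ I ∈ S, termB w I ≤ 512 * P.len * (bb w P + gg w P) := by
  intro N
  induction N with
  | zero =>
    intro P hv S hS
    have hsub : S ⊆ {P} := by
      intro I hI
      obtain ⟨h1, h2⟩ := hS I hI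
      rw [Finset.mem_singleton]
      exact eq_of_subset_of_n_le h1 (by simpa using h2)
    have h1 : ∑ I ∈ S, termB w I ≤ termB w P := by
      calc ∑ I ∈ S, termB w I ≤ ∑ I ∈ ({P} : Finset DyadicI), termB w I :=
            Finset.sum_le_sum_of_subset_of_nonneg hsub (fun i _ _ => termB_nonneg w i)
        _ = termB w P := Finset.sum_singleton _ _
    have h2 := key_interval hw hwpos hv (subset_refl P.set)
    have h3 : 0 ≤ (P.len/2) * (gg w P.plus + gg w P.minus) := by
      have := gg_nonneg w P.plus; have := gg_nonneg w P.minus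
      have := len_pos P
      positivity
    have h4 : 0 ≤ 512 * P.len * gg w P := by
      have := gg_nonneg w P; have := (len_pos P).le
      positivity
    nlinarith [h1, h2]
  | succ N ih =>
    intro P hv S hS
    obtain ⟨Sm, Sp, hSm, hSp, hSmS, hSpS, hsum⟩ :=
      sum_split (termB_nonneg w) S (fun I hI => (hS I hI).1)
    have ihm := ih P.minus (hv.mono_set (minus_subset P)) Sm (fun I hI => by
      refine ⟨hSm I hI, ?_⟩
      have := (hS I (hSmS hI)).2
      show I.n ≤ P.n + 1 + (N:ℤ)
      push_cast at this ⊢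
      omega)
    have ihp := ih P.plus (hv.mono_set (plus_subset P)) Sp (fun I hI => by
      refine ⟨hSp I hI, ?_⟩
      have := (hS I (hSpS hI)).2
      show I.n ≤ P.n + 1 + (N:ℤ)
      push_cast at this ⊢
      omega)
    rw [minus_len] at ihm
    rw [plus_len] at ihp
    have hkey := key_interval hw hwpos hv (subset_refl P.set)
    have hggP : 512 * P.len * (bb w P + gg w P)
        = 512 * P.len * bb w P + 256 * P.len * bb w P.plus + 256 * P.len * bb w P.minus := by
      unfold gg
      ring
    rw [hggP]
    linarith

lemma core2 (hw : MeasureTheory.LocallyIntegrable w volume)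
    (hwpos : ∀ᵐ x ∂(volume : Measure ℝ), 0 < w x) (hA : MemA2d w) :
    ∀ (N : ℕ) (P : DyadicI),
    ∀ S : Finset DyadicI, (∀ I ∈ S, I.set ⊆ P.set ∧ I.n ≤ P.n + N) →
    ∑ I ∈ S, term2 w I ≤ 1024 * A2d w * P.len := by
  have hvpos := winv_pos hwpos
  have hprod_le : ∀ I : DyadicI, avg w I * avg (winv w) I ≤ A2d w := fun I => le_ciSup hA I
  have hprod_nonneg : ∀ I : DyadicI, 0 ≤ avg w I * avg (winv w) I := fun I =>
    mul_nonneg (avg_nonneg (hwpos.mono fun x h => h.le))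
      (avg_nonneg (hvpos.mono fun x h => h.le))
  have hA0 : 0 ≤ A2d w := le_trans (hprod_nonneg ⟨0,0⟩) (hprod_le ⟨0,0⟩)
  -- the "good" case bound, valid whenever winv is integrable on P, for any admissible S
  have good : ∀ (N : ℕ) (P : DyadicI), MeasureTheory.IntegrableOn (winv w) P.set volume →
      ∀ S : Finset DyadicI, (∀ I ∈ S, I.set ⊆ P.set ∧ I.n ≤ P.n + N) →
      ∑ I ∈ S, term2 w I ≤ 1024 * A2d w * P.len := by
    intro N P hv S hS
    have hpoint : ∀ I ∈ S, term2 w I ≤ A2d w ^ ((3:ℝ)/4) * termB w I := by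
      intro I hI
      have hu : 0 ≤ avg w I := avg_nonneg (hwpos.mono fun x h => h.le)
      have hv' : 0 ≤ avg (winv w) I := avg_nonneg (hvpos.mono fun x h => h.le)
      have hid : avg w I * avg (winv w) I
          = (avg w I * avg (winv w) I) ^ ((3:ℝ)/4) * q (avg w I * avg (winv w) I) := by
        rw [← rpow_quarter (hprod_nonneg I),
          ← Real.rpow_add_of_nonneg (hprod_nonneg I) (by norm_num) (by norm_num)]
        norm_num
      have hq : q (avg w I * avg (winv w) I) = q (avg w I) * q (avg (winv w) I) := q_mul hu
      have h34 : (avg w I * avg (winv w) I) ^ ((3:ℝ)/4) ≤ A2d w ^ ((3:ℝ)/4) :=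
        Real.rpow_le_rpow (hprod_nonneg I) (hprod_le I) (by norm_num)
      have e1 : term2 w I = (avg w I * avg (winv w) I) ^ ((3:ℝ)/4) * termB w I := by
        unfold term2 termB bb
        rw [← hq]
        calc I.len * avg w I * avg (winv w) I * tt w I
            = (avg w I * avg (winv w) I) * (I.len * tt w I) := by ring
          _ = ((avg w I * avg (winv w) I) ^ ((3:ℝ)/4) * q (avg w I * avg (winv w) I))
              * (I.len * tt w I) := by rw [← hid]
          _ = _ := by ring
      rw [e1]
      exact mul_le_mul_of_nonneg_right h34 (termB_nonneg w I)
    have hsum1 : ∑ I ∈ S, term2 w I ≤ A2d w ^ ((3:ℝ)/4) * ∑ I ∈ S, termB w I := by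
      rw [Finset.mul_sum]
      exact Finset.sum_le_sum hpoint
    have hsum2 := core hw hwpos N P hv S hS
    have hgb := gg_le_bb hw hwpos hv
    have hbbq : bb w P ≤ A2d w ^ ((1:ℝ)/4) := by
      have : bb w P = q (avg w P * avg (winv w) P) := (q_mul (avg_nonneg (hwpos.mono fun x h => h.le))).symm
      rw [this, rpow_quarter hA0]
      exact q_le_q (hprod_le P)
    have h34nn : 0 ≤ A2d w ^ ((3:ℝ)/4) := Real.rpow_nonneg hA0 _
    have hsum3 : ∑ I ∈ S, termB w I ≤ 1024 * P.len * A2d w ^ ((1:ℝ)/4) := by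
      have h1 : 512 * P.len * (bb w P + gg w P) ≤ 512 * P.len * (2 * bb w P) := by
        apply mul_le_mul_of_nonneg_left _ (mul_nonneg (by norm_num) (len_pos P).le)
        linarith
      have h2 : 512 * P.len * (2 * bb w P) ≤ 512 * P.len * (2 * A2d w ^ ((1:ℝ)/4)) := by
        apply mul_le_mul_of_nonneg_left _ (mul_nonneg (by norm_num) (len_pos P).le)
        linarith
      calc ∑ I ∈ S, termB w I ≤ 512 * P.len * (bb w P + gg w P) := hsum2
        _ ≤ 512 * P.len * (2 * bb w P) := h1
        _ ≤ 512 * P.len * (2 * A2d w ^ ((1:ℝ)/4)) := h2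
        _ = 1024 * P.len * A2d w ^ ((1:ℝ)/4) := by ring
    have hrpow : A2d w ^ ((3:ℝ)/4) * A2d w ^ ((1:ℝ)/4) = A2d w := by
      rw [← Real.rpow_add_of_nonneg hA0 (by norm_num) (by norm_num)]
      norm_num
    calc ∑ I ∈ S, term2 w I ≤ A2d w ^ ((3:ℝ)/4) * ∑ I ∈ S, termB w I := hsum1
      _ ≤ A2d w ^ ((3:ℝ)/4) * (1024 * P.len * A2d w ^ ((1:ℝ)/4)) :=
          mul_le_mul_of_nonneg_left hsum3 h34nn
      _ = 1024 * (A2d w ^ ((3:ℝ)/4) * A2d w ^ ((1:ℝ)/4)) * P.len := by ring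
      _ = 1024 * A2d w * P.len := by rw [hrpow]
  intro N
  induction N with
  | zero =>
    intro P S hS
    by_cases hv : MeasureTheory.IntegrableOn (winv w) P.set volume
    · exact good 0 P hv S hS
    · have hterm : term2 w P = 0 := by
        have : avg (winv w) P = 0 := by
          unfold DyadicI.avg
          rw [MeasureTheory.integral_undef hv, zero_div]
        unfold term2
        rw [this]
        ring
      have hsub : S ⊆ {P} := by
        intro I hI
        obtain ⟨h1, h2⟩ := hS I hI
        rw [Finset.mem_singleton]
        exact eq_of_subset_of_n_le h1 (by simpa using h2)
      calc ∑ I ∈ S, term2 w I ≤ ∑ I ∈ ({P} : Finset DyadicI), term2 w I :=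
            Finset.sum_le_sum_of_subset_of_nonneg hsub (fun i _ _ => term2_nonneg hwpos i)
        _ = term2 w P := Finset.sum_singleton _ _
        _ = 0 := hterm
        _ ≤ 1024 * A2d w * P.len :=
            mul_nonneg (mul_nonneg (by norm_num) hA0) (len_pos P).le
  | succ N ih =>
    intro P S hS
    by_cases hv : MeasureTheory.IntegrableOn (winv w) P.set volume
    · exact good (N+1) P hv S hS
    · have hterm : term2 w P = 0 := by
        have : avg (winv w) P = 0 := by
          unfold DyadicI.avg
          rw [MeasureTheory.integral_undef hv, zero_div]
        unfold term2
        rw [this]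
        ring
      obtain ⟨Sm, Sp, hSm, hSp, hSmS, hSpS, hsum⟩ :=
        sum_split (term2_nonneg hwpos) S (fun I hI => (hS I hI).1)
      have ihm := ih P.minus Sm (fun I hI => by
        refine ⟨hSm I hI, ?_⟩
        have := (hS I (hSmS hI)).2
        show I.n ≤ P.n + 1 + (N:ℤ)
        push_cast at this ⊢
        omega)
      have ihp := ih P.plus Sp (fun I hI => by
        refine ⟨hSp I hI, ?_⟩
        have := (hS I (hSpS hI)).2
        show I.n ≤ P.n + 1 + (N:ℤ)
        push_cast at this ⊢
        omega)
      rw [minus_len] at ihm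
      rw [plus_len] at ihp
      linarith

lemma tsum_wrap {f : DyadicI → ℝ} (hf : ∀ I, 0 ≤ f I) {J : DyadicI} {c : ℝ} (hc : 0 ≤ c)
    (h : ∀ (N : ℕ) (S : Finset DyadicI), (∀ I ∈ S, I.set ⊆ J.set ∧ I.n ≤ J.n + N) →
      ∑ I ∈ S, f I ≤ c) :
    ∑' (I : {I : DyadicI // I.set ⊆ J.set}), f I.1 ≤ c := by
  apply tsum_le_of_sum_le' hc
  intro s
  classical
  have himg : ∑ i ∈ s, f i.1 = ∑ I ∈ s.image Subtype.val, f I :=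
    (Finset.sum_image (fun x _ y _ hxy => Subtype.ext hxy)).symm
  rw [himg]
  set T := s.image Subtype.val with hT
  apply h (T.sup fun I => (I.n - J.n).toNat)
  intro I hI
  have hsub : I.set ⊆ J.set := by
    obtain ⟨i, _, rfl⟩ := Finset.mem_image.1 hI
    exact i.2
  refine ⟨hsub, ?_⟩
  have h1 : 0 ≤ I.n - J.n := by have := n_ge_of_subset hsub; omega
  have h2 : (I.n - J.n).toNat ≤ T.sup fun I => (I.n - J.n).toNat :=
    Finset.le_sup (f := fun I : DyadicI => (I.n - J.n).toNat) hI
  have h3 := Int.toNat_of_nonneg h1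
  omega

end NV19
end NVsec

/-- the Bellman function lemma for the embedding condition, and its
`A₂^d` consequence. -/
theorem stmt19 : ∃ C > (0:ℝ),
    (∀ w : ℝ → ℝ, IsWeight w → MeasureTheory.LocallyIntegrable (winv w) → ∀ J : DyadicI,
      (1 / J.len) * ∑' I : {I : DyadicI // I.set ⊆ J.set},
          I.1.len * DyadicI.avg w I.1 ^ ((1:ℝ)/4) * DyadicI.avg (winv w) I.1 ^ ((1:ℝ)/4) *
            ((|DyadicI.del w I.1.plus| + |DyadicI.del w I.1.minus|) / DyadicI.avg w I.1) ^ 2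
        ≤ C * DyadicI.avg w J ^ ((1:ℝ)/4) * DyadicI.avg (winv w) J ^ ((1:ℝ)/4)) ∧
    (∀ w : ℝ → ℝ, IsWeight w → MemA2d w → ∀ J : DyadicI,
      (1 / J.len) * ∑' I : {I : DyadicI // I.set ⊆ J.set},
          I.1.len * DyadicI.avg w I.1 * DyadicI.avg (winv w) I.1 *
            ((|DyadicI.del w I.1.plus| + |DyadicI.del w I.1.minus|) / DyadicI.avg w I.1) ^ 2
        ≤ C * A2d w) := by
  refine ⟨1024, by norm_num, ?_, ?_⟩
  · -- part 1
    intro w hw hwinv J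
    obtain ⟨hwloc, hwpos⟩ := hw
    have hvpos := NV19.winv_pos hwpos
    have hvJ : MeasureTheory.IntegrableOn (winv w) J.set volume :=
      NV19.integrableOn_of_locally hwinv J
    have hcong : ∀ I : {I : DyadicI // I.set ⊆ J.set},
        I.1.len * DyadicI.avg w I.1 ^ ((1:ℝ)/4) * DyadicI.avg (winv w) I.1 ^ ((1:ℝ)/4) *
          ((|DyadicI.del w I.1.plus| + |DyadicI.del w I.1.minus|) / DyadicI.avg w I.1) ^ 2
        = NV19.termB w I.1 := by
      intro I
      rw [NV19.rpow_quarter (NV19.avg_nonneg (hwpos.mono fun x h => h.le)),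
          NV19.rpow_quarter (NV19.avg_nonneg (hvpos.mono fun x h => h.le))]
      unfold NV19.termB NV19.bb NV19.tt
      ring
    rw [tsum_congr hcong]
    have hbbnn := NV19.bb_nonneg w J
    have hggnn := NV19.gg_nonneg w J
    have hlen := NV19.len_pos J
    have hbound : ∑' (I : {I : DyadicI // I.set ⊆ J.set}), NV19.termB w I.1
        ≤ 512 * J.len * (NV19.bb w J + NV19.gg w J) := by
      apply NV19.tsum_wrap (NV19.termB_nonneg w)
        (mul_nonneg (mul_nonneg (by norm_num) hlen.le) (by linarith))
      intro N S hS
      exact NV19.core hwloc hwpos N J hvJ S hS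
    have hgb := NV19.gg_le_bb hwloc hwpos hvJ
    have hfin : ∑' (I : {I : DyadicI // I.set ⊆ J.set}), NV19.termB w I.1
        ≤ 1024 * J.len * NV19.bb w J := by
      have h1 : 512 * J.len * (NV19.bb w J + NV19.gg w J)
          ≤ 512 * J.len * (2 * NV19.bb w J) := by
        apply mul_le_mul_of_nonneg_left _ (mul_nonneg (by norm_num) hlen.le)
        linarith
      calc _ ≤ 512 * J.len * (NV19.bb w J + NV19.gg w J) := hbound
        _ ≤ 512 * J.len * (2 * NV19.bb w J) := h1
        _ = 1024 * J.len * NV19.bb w J := by ring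
    have hdiv := mul_le_mul_of_nonneg_left hfin (by positivity : (0:ℝ) ≤ 1/J.len)
    calc (1 / J.len) * ∑' (I : {I : DyadicI // I.set ⊆ J.set}), NV19.termB w I.1
        ≤ (1/J.len) * (1024 * J.len * NV19.bb w J) := hdiv
      _ = 1024 * NV19.bb w J := by field_simp
      _ = 1024 * DyadicI.avg w J ^ ((1:ℝ)/4) * DyadicI.avg (winv w) J ^ ((1:ℝ)/4) := by
          rw [NV19.rpow_quarter (NV19.avg_nonneg (hwpos.mono fun x h => h.le)),
            NV19.rpow_quarter (NV19.avg_nonneg (hvpos.mono fun x h => h.le))]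
          unfold NV19.bb
          ring
  · -- part 2
    intro w hw hA J
    obtain ⟨hwloc, hwpos⟩ := hw
    have hvpos := NV19.winv_pos hwpos
    have hA0 : 0 ≤ A2d w := by
      have h1 : ∀ I : DyadicI, 0 ≤ DyadicI.avg w I * DyadicI.avg (winv w) I := fun I =>
        mul_nonneg (NV19.avg_nonneg (hwpos.mono fun x h => h.le))
          (NV19.avg_nonneg (hvpos.mono fun x h => h.le))
      exact le_trans (h1 ⟨0,0⟩) (le_ciSup hA ⟨0,0⟩)
    have hlen := NV19.len_pos J
    have hcong : ∀ I : {I : DyadicI // I.set ⊆ J.set},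
        I.1.len * DyadicI.avg w I.1 * DyadicI.avg (winv w) I.1 *
          ((|DyadicI.del w I.1.plus| + |DyadicI.del w I.1.minus|) / DyadicI.avg w I.1) ^ 2
        = NV19.term2 w I.1 := by
      intro I
      unfold NV19.term2 NV19.tt
      ring
    rw [tsum_congr hcong]
    have hbound : ∑' (I : {I : DyadicI // I.set ⊆ J.set}), NV19.term2 w I.1
        ≤ 1024 * A2d w * J.len := by
      apply NV19.tsum_wrap (NV19.term2_nonneg hwpos)
        (mul_nonneg (mul_nonneg (by norm_num) hA0) hlen.le)
      intro N S hS
      exact NV19.core2 hwloc hwpos hA N J S hS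
    have hdiv := mul_le_mul_of_nonneg_left hbound (by positivity : (0:ℝ) ≤ 1/J.len)
    calc (1 / J.len) * ∑' (I : {I : DyadicI // I.set ⊆ J.set}), NV19.term2 w I.1
        ≤ (1/J.len) * (1024 * A2d w * J.len) := hdiv
      _ = 1024 * A2d w := by field_simp
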